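/- If m is odd and A is an m-th order n-dimensional real P_0 tensor, then every Z-eigenvalue of A is zero. -/
import Mathlib


open Finset

noncomputable section

/-- The contraction `(A x^{m})_i` of an order-`m+1` tensor with `m` copies of `x`. -/
def contrT {m n : ℕ} (A : (Fin (m+1) → Fin n) → ℝ) (x : Fin n → ℝ) (i : Fin n) : ℝ :=
  ∑ f : Fin m → Fin n, A (Fin.cons i f) * ∏ k, x (f k)

/-- `A x^M` for an order-`M` tensor. -/
def polyT {M n : ℕ} (A : (Fin M → Fin n) → ℝ) (x : Fin n → ℝ) : ℝ :=
  ∑ f : Fin M → Fin n, A f * ∏ k, x (f k)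

/-- P tensor: for every nonzero `x`, `max_i x_i (A x^{m-1})_i > 0`. -/
def IsPTensor {m n : ℕ} (A : (Fin (m+1) → Fin n) → ℝ) : Prop :=
  ∀ x : Fin n → ℝ, x ≠ 0 → ∃ i : Fin n, 0 < x i * contrT A x i

/-- P₀ tensor: for every nonzero `x` there is `i` with `x i ≠ 0` and `x_i (A x^{m-1})_i ≥ 0`. -/
def IsP0Tensor {m n : ℕ} (A : (Fin (m+1) → Fin n) → ℝ) : Prop :=
  ∀ x : Fin n → ℝ, x ≠ 0 → ∃ i : Fin n, x i ≠ 0 ∧ 0 ≤ x i * contrT A x i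

def infNorm {n : ℕ} (x : Fin n → ℝ) : ℝ := ⨆ i, |x i|

/-- The operator `T_A(x) = ‖x‖₂^{2-m} A x^{m-1}` (order of the tensor is `m+1`). -/
def TA {m n : ℕ} (A : (Fin (m+1) → Fin n) → ℝ) (x : Fin n → ℝ) (i : Fin n) : ℝ :=
  if x = 0 then 0
  else (Real.sqrt (∑ j, x j ^ 2)) ^ ((2 : ℤ) - ((m : ℤ) + 1)) * contrT A x i

/-- `α(T_A) = min_{‖x‖_∞ = 1} max_i x_i (T_A(x))_i`. -/
def alphaT {m n : ℕ} (A : (Fin (m+1) → Fin n) → ℝ) : ℝ :=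
  sInf ((fun x => ⨆ i, x i * TA A x i) '' {x : Fin n → ℝ | infNorm x = 1})

/-- B tensor of order `m+1`. -/
def IsBTensor {m n : ℕ} (B : (Fin (m+1) → Fin n) → ℝ) : Prop :=
  ∀ i : Fin n, (0 < ∑ f : Fin m → Fin n, B (Fin.cons i f)) ∧
    ∀ g : Fin m → Fin n, g ≠ (fun _ => i) →
      B (Fin.cons i g) < (1 / (n : ℝ) ^ m) * ∑ f : Fin m → Fin n, B (Fin.cons i f)

/-- B₀ tensor of order `m+1`. -/
def IsB0Tensor {m n : ℕ} (B : (Fin (m+1) → Fin n) → ℝ) : Prop :=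
  ∀ i : Fin n, (0 ≤ ∑ f : Fin m → Fin n, B (Fin.cons i f)) ∧
    ∀ g : Fin m → Fin n, g ≠ (fun _ => i) →
      B (Fin.cons i g) ≤ (1 / (n : ℝ) ^ m) * ∑ f : Fin m → Fin n, B (Fin.cons i f)

theorem stmt5 (m n : ℕ) (hm : Odd (m + 1))
    (A : (Fin (m+1) → Fin n) → ℝ) (hP0 : IsP0Tensor A)
    (lam : ℝ) (x : Fin n → ℝ) (hunit : ∑ i, x i ^ 2 = 1)
    (heig : ∀ i, contrT A x i = lam * x i) :
    lam = 0 := by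
  have hme : Even m := by
    rcases hm with ⟨k, hk⟩
    exact ⟨k, by omega⟩
  have hx0 : x ≠ 0 := by
    intro h
    rw [h] at hunit
    simp at hunit
  have hneg : ∀ i, contrT A (-x) i = contrT A x i := by
    intro i
    unfold contrT
    refine Finset.sum_congr rfl fun f _ => ?_
    congr 1
    have : ∏ k, (-x) (f k) = (∏ _k : Fin m, (-1 : ℝ)) * ∏ k, x (f k) := by
      rw [← Finset.prod_mul_distrib]
      simp
    rw [this]
    simp [hme.neg_one_pow]
  obtain ⟨i, hi, hpos⟩ := hP0 x hx0
  obtain ⟨j, hj, hpos'⟩ := hP0 (-x) (neg_ne_zero.mpr hx0)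
  rw [heig i] at hpos
  rw [hneg j, heig j] at hpos'
  simp only [Pi.neg_apply] at hpos'
  simp only [Pi.neg_apply, neg_ne_zero] at hj
  have h1 : 0 ≤ lam * x i ^ 2 := by nlinarith
  have h2 : lam * x j ^ 2 ≤ 0 := by nlinarith
  have hxi : 0 < x i ^ 2 := by positivity
  have hxj : 0 < x j ^ 2 := by positivity
  nlinarith
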